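/- Let G be an undirected graph on {1,…,N} with closed neighborhoods 𝒩_j of sizes N_j, N_min = min_j N_j, N_max = max_j N_j. Let T_1,…,T_N ≥ 0 with T = Σ_i T_i, and let σ_1²,…,σ_N² ≥ 0 with average σ̄² = (1/N) Σ_j σ_j². Then Σ_{j=1}^N ( √(1 + σ_j²(N_j − 1)) / min_{i ∈ 𝒩_j} N_i ) √( Σ_{i ∈ 𝒩_j} T_i ) ≤ (N / N_min) √(1 + σ̄²(N_max − 1)) √T. -/

import Mathlib

lemma sum_sqrt_le_sqrt_card_mul {ι : Type*} (s : Finset ι) (f : ι → ℝ)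
    (hf : ∀ i ∈ s, 0 ≤ f i) :
    ∑ i ∈ s, Real.sqrt (f i) ≤ Real.sqrt (s.card : ℝ) * Real.sqrt (∑ i ∈ s, f i) := by
  rw [← Real.sqrt_mul (by positivity)]
  rw [Real.le_sqrt (Finset.sum_nonneg fun i _ => Real.sqrt_nonneg _)
    (mul_nonneg (by positivity) (Finset.sum_nonneg hf))]
  calc (∑ i ∈ s, Real.sqrt (f i)) ^ 2
      = (∑ i ∈ s, 1 * Real.sqrt (f i)) ^ 2 := by simp
    _ ≤ (∑ i ∈ s, (1:ℝ) ^ 2) * ∑ i ∈ s, Real.sqrt (f i) ^ 2 :=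
        Finset.sum_mul_sq_le_sq_mul_sq s _ _
    _ = (s.card : ℝ) * ∑ i ∈ s, f i := by
        rw [Finset.sum_congr rfl fun i hi => Real.sq_sqrt (hf i hi)]
        simp

/-- Second part of the uniform-weights bound in Theorem 2 (average local variance):
`Σ_j (√(1+σ_j²(N_j−1)) / min_{i∈𝒩_j} N_i) √(Σ_{i∈𝒩_j} T_i)
  ≤ (N/N_min) √(1+σ̄²(N_max−1)) √T`. -/
theorem stmt_7 (N : ℕ) (hN : 0 < N)
    (𝒩 : Fin N → Finset (Fin N))
    (hself : ∀ i, i ∈ 𝒩 i)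
    (hsym : ∀ i j : Fin N, j ∈ 𝒩 i ↔ i ∈ 𝒩 j)
    (Tv : Fin N → ℝ) (hTv : ∀ i, 0 ≤ Tv i)
    (σ2 : Fin N → ℝ) (hσ2 : ∀ j, 0 ≤ σ2 j) :
    ∑ j : Fin N,
        (Real.sqrt (1 + σ2 j * (((𝒩 j).card : ℝ) - 1))
            / ((𝒩 j).inf' ⟨j, hself j⟩ fun i => ((𝒩 i).card : ℝ)))
          * Real.sqrt (∑ i ∈ 𝒩 j, Tv i)
      ≤ ((N : ℝ)
          / (Finset.univ.inf' ⟨⟨0, hN⟩, Finset.mem_univ _⟩ fun i : Fin N => ((𝒩 i).card : ℝ)))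
        * Real.sqrt (1 +
            ((1 / (N : ℝ)) * ∑ j : Fin N, σ2 j) *
            ((Finset.univ.sup' ⟨⟨0, hN⟩, Finset.mem_univ _⟩ fun i : Fin N => ((𝒩 i).card : ℝ)) - 1))
        * Real.sqrt (∑ i : Fin N, Tv i) := by
  set Nmin := Finset.univ.inf' ⟨⟨0, hN⟩, Finset.mem_univ _⟩
    (fun i : Fin N => ((𝒩 i).card : ℝ)) with hNmindef
  set Nmax := Finset.univ.sup' ⟨⟨0, hN⟩, Finset.mem_univ _⟩
    (fun i : Fin N => ((𝒩 i).card : ℝ)) with hNmaxdef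
  have hcard1 : ∀ i : Fin N, (1:ℝ) ≤ ((𝒩 i).card : ℝ) := fun i => by
    exact_mod_cast Finset.card_pos.mpr ⟨i, hself i⟩
  have hNmin1 : (1:ℝ) ≤ Nmin :=
    Finset.le_inf' _ _ fun b _ => hcard1 b
  have hNminpos : 0 < Nmin := lt_of_lt_of_le one_pos hNmin1
  have hNmax1 : (1:ℝ) ≤ Nmax :=
    le_trans (hcard1 ⟨0, hN⟩) (Finset.le_sup' (fun i : Fin N => ((𝒩 i).card : ℝ)) (Finset.mem_univ ⟨0, hN⟩))
  have hNj_max : ∀ j : Fin N, ((𝒩 j).card : ℝ) ≤ Nmax :=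
    fun j => Finset.le_sup' (fun i : Fin N => ((𝒩 i).card : ℝ)) (Finset.mem_univ j)
  have hTsum : ∀ j : Fin N, ∑ i ∈ 𝒩 j, Tv i ≤ ∑ i : Fin N, Tv i := fun j =>
    Finset.sum_le_sum_of_subset_of_nonneg (Finset.subset_univ _)
      (fun i _ _ => hTv i)
  have ha : ∀ j : Fin N, (0:ℝ) ≤ 1 + σ2 j * (Nmax - 1) := fun j => by
    have := hσ2 j; nlinarith [hNmax1]
  -- pointwise bound
  have hstep1 : ∀ j : Fin N,
      (Real.sqrt (1 + σ2 j * (((𝒩 j).card : ℝ) - 1))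
          / ((𝒩 j).inf' ⟨j, hself j⟩ fun i => ((𝒩 i).card : ℝ)))
        * Real.sqrt (∑ i ∈ 𝒩 j, Tv i)
      ≤ (Real.sqrt (1 + σ2 j * (Nmax - 1)) / Nmin)
        * Real.sqrt (∑ i : Fin N, Tv i) := by
    intro j
    have hinf : Nmin ≤ (𝒩 j).inf' ⟨j, hself j⟩ fun i => ((𝒩 i).card : ℝ) :=
      Finset.le_inf' _ _ fun b _ => Finset.inf'_le _ (Finset.mem_univ b)
    have hnum : Real.sqrt (1 + σ2 j * (((𝒩 j).card : ℝ) - 1))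
        ≤ Real.sqrt (1 + σ2 j * (Nmax - 1)) := by
      apply Real.sqrt_le_sqrt
      have := hσ2 j
      nlinarith [hNj_max j]
    have hdiv : Real.sqrt (1 + σ2 j * (((𝒩 j).card : ℝ) - 1))
          / ((𝒩 j).inf' ⟨j, hself j⟩ fun i => ((𝒩 i).card : ℝ))
        ≤ Real.sqrt (1 + σ2 j * (Nmax - 1)) / Nmin :=
      div_le_div₀ (Real.sqrt_nonneg _) hnum hNminpos hinf
    exact mul_le_mul hdiv (Real.sqrt_le_sqrt (hTsum j)) (Real.sqrt_nonneg _)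
      (by positivity)
  calc ∑ j : Fin N,
        (Real.sqrt (1 + σ2 j * (((𝒩 j).card : ℝ) - 1))
            / ((𝒩 j).inf' ⟨j, hself j⟩ fun i => ((𝒩 i).card : ℝ)))
          * Real.sqrt (∑ i ∈ 𝒩 j, Tv i)
      ≤ ∑ j : Fin N, (Real.sqrt (1 + σ2 j * (Nmax - 1)) / Nmin)
          * Real.sqrt (∑ i : Fin N, Tv i) :=
        Finset.sum_le_sum fun j _ => hstep1 j
    _ = (∑ j : Fin N, Real.sqrt (1 + σ2 j * (Nmax - 1)))
          * (Real.sqrt (∑ i : Fin N, Tv i) / Nmin) := by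
        rw [Finset.sum_mul]; congr 1; ext j; ring
    _ ≤ (Real.sqrt (N : ℝ) * Real.sqrt (∑ j : Fin N, (1 + σ2 j * (Nmax - 1))))
          * (Real.sqrt (∑ i : Fin N, Tv i) / Nmin) := by
        apply mul_le_mul_of_nonneg_right _ (by positivity)
        have := sum_sqrt_le_sqrt_card_mul Finset.univ
          (fun j : Fin N => 1 + σ2 j * (Nmax - 1)) (fun j _ => ha j)
        simpa using this
    _ = ((N : ℝ) / Nmin)
          * Real.sqrt (1 + ((1 / (N : ℝ)) * ∑ j : Fin N, σ2 j) * (Nmax - 1))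
          * Real.sqrt (∑ i : Fin N, Tv i) := by
        have hsum : ∑ j : Fin N, (1 + σ2 j * (Nmax - 1))
            = (N : ℝ) * (1 + ((1 / (N : ℝ)) * ∑ j : Fin N, σ2 j) * (Nmax - 1)) := by
          rw [Finset.sum_add_distrib, ← Finset.sum_mul]
          field_simp
          simp
        rw [hsum, Real.sqrt_mul (by positivity), ← mul_assoc,
          ← Real.sqrt_mul (by positivity), Real.sqrt_mul_self (by positivity)]
        ring
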